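/- arXiv:1511.09078 — 3 statements merged into one kernel-verified Lean document; each statement's English description precedes it below -/
import Mathlib

section
/- Let I = {I_1,…,I_m} be a partition of {1,…,p} into groups each of size l, let w > 0, let λ₁ ≥ … ≥ λ_m ≥ 0, and let b ∈ ℝ^p satisfy ‖b_{I_1}‖₂ > ‖b_{I_2}‖₂ > … > ‖b_{I_s}‖₂ > 0 and ‖b_{I_j}‖₂ = 0 for all j > s. Set λ^c = (λ_{s+1},…,λ_m)ᵀ. If g ∈ ℝ^p is a subgradient at b of the convex function b ↦ J_λ(w ⟦b⟧_I), i.e. J_λ(w ⟦b+h⟧_I) ≥ J_λ(w ⟦b⟧_I) + gᵀh for all h ∈ ℝ^p, then g_{I_i} = w λ_i · b_{I_i}/‖b_{I_i}‖₂ for every i = 1,…,s, and the vector (‖g_{I_{s+1}}‖₂,…,‖g_{I_m}‖₂)ᵀ ∈ ℝ^{m−s} belongs to the set C_{wλ^c}. -/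
open Finset

/-- The nonincreasing rearrangement of the absolute values of the coordinates of `b`. -/
noncomputable def sortedAbs {p : ℕ} (b : Fin p → ℝ) : Fin p → ℝ :=
  fun i => |b (Tuple.sort (fun j => |b j|) (Fin.rev i))|

/-- The sorted ℓ₁ norm `J_λ(b) = Σ_i λ_i |b|_{(i)}`. -/
noncomputable def Jlam {p : ℕ} (lam b : Fin p → ℝ) : ℝ :=
  ∑ i, lam i * sortedAbs b i

/-- With coordinates partitioned into `m` groups of equal size `l` (indexed by
`Fin m × Fin l`), `gnorm b i = ‖b_{I_i}‖₂`. -/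
noncomputable def gnorm {m l : ℕ} (b : Fin m × Fin l → ℝ) (i : Fin m) : ℝ :=
  Real.sqrt (∑ j, b (i, j) ^ 2)

/-- The index `s + k` of the `k`-th group beyond the first `s` groups. -/
def tailIdx {m s : ℕ} (hs : s ≤ m) (k : Fin (m - s)) : Fin m :=
  ⟨s + k.1, by have := k.isLt; omega⟩

/-- sortedAbs as composition with a bijection. -/
noncomputable def sortPerm {p : ℕ} (b : Fin p → ℝ) : Equiv.Perm (Fin p) :=
  ((Fin.revPerm).trans (Tuple.sort (fun j => |b j|)))

lemma sortedAbs_eq_comp {p : ℕ} (b : Fin p → ℝ) (i : Fin p) :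
    sortedAbs b i = |b (sortPerm b i)| := rfl

lemma antitone_sortedAbs {p : ℕ} (b : Fin p → ℝ) : Antitone (sortedAbs b) := by
  intro i j hij
  have hmono := Tuple.monotone_sort (fun j => |b j|)
  have : Fin.rev j ≤ Fin.rev i := Fin.rev_le_rev.mpr hij
  exact hmono this

lemma sortedAbs_nonneg {p : ℕ} (b : Fin p → ℝ) (i : Fin p) : 0 ≤ sortedAbs b i :=
  abs_nonneg _

/-- Lemma A: sortedAbs of an antitone nonneg vector is itself. -/
lemma sortedAbs_of_antitone {p : ℕ} {v : Fin p → ℝ} (hv : Antitone v)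
    (hv0 : ∀ i, 0 ≤ v i) : sortedAbs v = v := by
  have habs : (fun j => |v j|) = v := by
    funext j; exact abs_of_nonneg (hv0 j)
  have h1 : Monotone ((fun j => |v j|) ∘ (Tuple.sort (fun j => |v j|))) :=
    Tuple.monotone_sort _
  have h2 : Monotone ((fun j => |v j|) ∘ (Fin.revPerm : Equiv.Perm (Fin p))) := by
    rw [habs]
    intro i j hij
    exact hv (by simpa using Fin.rev_le_rev.mpr hij)
  funext i
  have h3 := congrFun (Tuple.unique_monotone h1 h2) (Fin.rev i)
  simp only [Function.comp] at h3
  show |v ((Tuple.sort fun j => |v j|) (Fin.rev i))| = v i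
  rw [h3]
  simp [abs_of_nonneg (hv0 _)]

lemma Jlam_of_antitone {p : ℕ} (lam : Fin p → ℝ) {v : Fin p → ℝ} (hv : Antitone v)
    (hv0 : ∀ i, 0 ≤ v i) : Jlam lam v = ∑ i, lam i * v i := by
  rw [Jlam, sortedAbs_of_antitone hv hv0]

/-- Lemma C: lower bound on Jlam by any permutation pairing. -/
lemma sum_perm_le_Jlam {p : ℕ} (lam y : Fin p → ℝ)
    (hanti : ∀ i j : Fin p, i ≤ j → lam j ≤ lam i)
    (e : Equiv.Perm (Fin p)) :
    ∑ i, lam i * |y (e i)| ≤ Jlam lam y := by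
  have key : ∀ i, |y (e i)| = sortedAbs y ((sortPerm y).symm (e i)) := by
    intro i
    rw [sortedAbs_eq_comp]
    simp
  have hmv : Monovary lam (sortedAbs y) := by
    intro i j hgij
    rcases le_or_gt i j with h | h
    · exact absurd (antitone_sortedAbs y h) (not_le.mpr hgij)
    · exact hanti j i h.le
  calc ∑ i, lam i * |y (e i)|
      = ∑ i, lam i * sortedAbs y ((e.trans (sortPerm y).symm) i) := by
        simp_rw [key]; rfl
    _ ≤ ∑ i, lam i * sortedAbs y i := hmv.sum_mul_comp_perm_le_sum_mul
    _ = Jlam lam y := rfl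

/-- Lemma D: monotonicity of Jlam. -/
lemma Jlam_mono {p : ℕ} (lam : Fin p → ℝ) {x y : Fin p → ℝ}
    (hanti : ∀ i j : Fin p, i ≤ j → lam j ≤ lam i)
    (hnn : ∀ i, 0 ≤ lam i)
    (hxy : ∀ i, |x i| ≤ y i) : Jlam lam x ≤ Jlam lam y := by
  calc Jlam lam x = ∑ i, lam i * |x (sortPerm x i)| := rfl
    _ ≤ ∑ i, lam i * |y (sortPerm x i)| := by
        apply Finset.sum_le_sum
        intro i _
        exact mul_le_mul_of_nonneg_left
          ((hxy _).trans (le_abs_self _)) (hnn i)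
    _ ≤ Jlam lam y := sum_perm_le_Jlam lam y hanti _

/-- Lemma E: Jlam is invariant under permutation of coordinates. -/
lemma Jlam_comp_perm {p : ℕ} (lam x : Fin p → ℝ) (e : Equiv.Perm (Fin p)) :
    Jlam lam (x ∘ e) = Jlam lam x := by
  have key := Tuple.comp_perm_comp_sort_eq_comp_sort (f := fun j => |x j|) (σ := e)
  unfold Jlam sortedAbs
  refine Finset.sum_congr rfl fun i _ => ?_
  congr 1
  exact congrFun key (Fin.rev i)

lemma gnorm_nonneg {m l : ℕ} (b : Fin m × Fin l → ℝ) (i : Fin m) : 0 ≤ gnorm b i :=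
  Real.sqrt_nonneg _

lemma sq_gnorm {m l : ℕ} (b : Fin m × Fin l → ℝ) (i : Fin m) :
    gnorm b i ^ 2 = ∑ j, b (i, j) ^ 2 :=
  Real.sq_sqrt (Finset.sum_nonneg fun j _ => sq_nonneg _)

lemma gnorm_eq_zero_iff {m l : ℕ} {b : Fin m × Fin l → ℝ} {i : Fin m}
    (h : gnorm b i = 0) (j : Fin l) : b (i, j) = 0 := by
  have h2 : ∑ j, b (i, j) ^ 2 = 0 := by
    have := sq_gnorm b i; rw [h] at this; simpa using this.symm
  have := (Finset.sum_eq_zero_iff_of_nonneg (fun j _ => sq_nonneg (b (i,j)))).mp h2 j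
    (Finset.mem_univ j)
  exact pow_eq_zero_iff (by norm_num) |>.mp this

/-- Summing a function vanishing on the head over all of `Fin m` equals summing over tail. -/
lemma sum_tail {m s : ℕ} (hs : s ≤ m) (F : Fin m → ℝ) (h0 : ∀ i : Fin m, (i : ℕ) < s → F i = 0) :
    ∑ i, F i = ∑ r : Fin (m - s), F (tailIdx hs r) := by
  classical
  have h1 : ∑ i, F i = ∑ i ∈ Finset.univ.filter (fun i : Fin m => s ≤ (i : ℕ)), F i := by
    rw [Finset.sum_filter]
    apply Finset.sum_congr rfl
    intro i _
    by_cases hi : s ≤ (i : ℕ)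
    · simp [hi]
    · simp [hi, h0 i (by omega)]
  rw [h1]
  refine Finset.sum_bij'
    (i := fun (i : Fin m) (hi : i ∈ Finset.univ.filter (fun i : Fin m => s ≤ (i : ℕ))) =>
      (⟨(i : ℕ) - s, by simp only [Finset.mem_filter] at hi; have := i.isLt; omega⟩ : Fin (m - s)))
    (j := fun (r : Fin (m - s)) _ => tailIdx hs r) ?_ ?_ ?_ ?_ ?_
  · intro a ha; exact Finset.mem_univ _
  · intro r _; simp [tailIdx]
  · intro a ha
    simp only [Finset.mem_filter] at ha
    apply Fin.ext; simp [tailIdx]; omega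
  · intro r _
    apply Fin.ext; simp [tailIdx]
  · intro a ha
    simp only [Finset.mem_filter] at ha
    congr 1
    apply Fin.ext; simp [tailIdx]; omega

/-- Lift a permutation of the tail `Fin (m - s)` to a permutation of `Fin m` fixing the head. -/
def liftTail {m s : ℕ} (hs : s ≤ m) (τ : Equiv.Perm (Fin (m - s))) : Equiv.Perm (Fin m) :=
  ((finCongr (by omega : m = s + (m - s))).trans finSumFinEquiv.symm).trans
    (((Equiv.refl (Fin s)).sumCongr τ).trans
      (finSumFinEquiv.trans (finCongr (by omega : s + (m - s) = m))))

lemma liftTail_head {m s : ℕ} (hs : s ≤ m) (τ : Equiv.Perm (Fin (m - s)))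
    (i : Fin m) (hi : (i : ℕ) < s) : liftTail hs τ i = i := by
  have h1 : (finCongr (by omega : m = s + (m - s))) i = Fin.castAdd (m - s) ⟨(i:ℕ), hi⟩ := by
    apply Fin.ext; simp
  simp only [liftTail, Equiv.trans_apply, h1, finSumFinEquiv_symm_apply_castAdd]
  apply Fin.ext
  simp

lemma liftTail_tail {m s : ℕ} (hs : s ≤ m) (τ : Equiv.Perm (Fin (m - s)))
    (r : Fin (m - s)) : liftTail hs τ (tailIdx hs r) = tailIdx hs (τ r) := by
  have h1 : (finCongr (by omega : m = s + (m - s))) (tailIdx hs r) = Fin.natAdd s r := by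
    apply Fin.ext; simp [tailIdx]
  simp only [liftTail, Equiv.trans_apply, h1, finSumFinEquiv_symm_apply_natAdd]
  apply Fin.ext
  simp [tailIdx]

set_option maxHeartbeats 1000000 in
/-- Theorem 3 (subgradient characterization).  Suppose `‖b_{I_1}‖₂ > … > ‖b_{I_s}‖₂ > 0` and
`‖b_{I_j}‖₂ = 0` for `j > s`.  If `g` is a subgradient at `b` of `b ↦ J_λ(w⟦b⟧_I)`, then
`g_{I_i} = wλ_i b_{I_i}/‖b_{I_i}‖₂` for `i ≤ s` and `(‖g_{I_{s+1}}‖₂,…,‖g_{I_m}‖₂) ∈ C_{wλᶜ}`,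
where `λᶜ = (λ_{s+1},…,λ_m)`. -/
theorem subgradient_groupSortedL1 {m l s : ℕ} (hl : 0 < l) (hs : s ≤ m)
    (w : ℝ) (hw : 0 < w)
    (lam : Fin m → ℝ)
    (hlam_anti : ∀ i j : Fin m, i ≤ j → lam j ≤ lam i)
    (hlam_nonneg : ∀ i, 0 ≤ lam i)
    (b : Fin m × Fin l → ℝ)
    (hb_strict : ∀ i j : Fin m, (i : ℕ) < (j : ℕ) → (j : ℕ) < s → gnorm b j < gnorm b i)
    (hb_pos : ∀ i : Fin m, (i : ℕ) < s → 0 < gnorm b i)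
    (hb_zero : ∀ i : Fin m, s ≤ (i : ℕ) → gnorm b i = 0)
    (g : Fin m × Fin l → ℝ)
    (hsub : ∀ h : Fin m × Fin l → ℝ,
      Jlam lam (fun i => w * gnorm b i) + ∑ c, g c * h c ≤
        Jlam lam (fun i => w * gnorm (b + h) i)) :
    (∀ i : Fin m, (i : ℕ) < s → ∀ j : Fin l,
        g (i, j) = w * lam i * b (i, j) / gnorm b i) ∧
    (∀ k : Fin (m - s),
        ∑ i ∈ univ.filter (fun i : Fin (m - s) => i ≤ k),
            sortedAbs (fun i : Fin (m - s) => gnorm g (tailIdx hs i)) i ≤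
          ∑ i ∈ univ.filter (fun i : Fin (m - s) => i ≤ k), w * lam (tailIdx hs i)) := by
  classical
  have hbanti : ∀ i j : Fin m, i ≤ j → gnorm b j ≤ gnorm b i := by
    intro i j hij
    rcases eq_or_lt_of_le hij with rfl | hlt
    · exact le_refl _
    · by_cases hjs : (j : ℕ) < s
      · exact (hb_strict i j (by exact_mod_cast hlt) hjs).le
      · rw [hb_zero j (by omega)]; exact gnorm_nonneg b i
  have hvanti : Antitone (fun i => w * gnorm b i) := fun i j hij =>
    mul_le_mul_of_nonneg_left (hbanti i j hij) hw.le
  have hvnn : ∀ i, 0 ≤ w * gnorm b i := fun i => mul_nonneg hw.le (gnorm_nonneg b i)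
  have hbase : Jlam lam (fun i => w * gnorm b i) = ∑ i, lam i * (w * gnorm b i) :=
    Jlam_of_antitone lam hvanti hvnn
  constructor
  · -- Part 1
    intro i0 hi0 j0
    have hN : 0 < gnorm b i0 := hb_pos i0 hi0
    set N := gnorm b i0 with hNdef
    set c := b (i0, j0) with hcdef
    have him : (i0 : ℕ) < m := i0.isLt
    set γp : ℝ := if _h : 0 < (i0 : ℕ) then gnorm b ⟨(i0:ℕ)-1, by omega⟩ - N else 1 with hγp
    set γn : ℝ := if _h : (i0:ℕ)+1 < s then N - gnorm b ⟨(i0:ℕ)+1, by omega⟩ else N with hγn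
    have hγp_pos : 0 < γp := by
      rw [hγp]
      split_ifs with h
      · have := hb_strict ⟨(i0:ℕ)-1, by omega⟩ i0 (by simpa using by omega) hi0
        linarith
      · norm_num
    have hγn_pos : 0 < γn := by
      rw [hγn]
      split_ifs with h
      · have := hb_strict i0 ⟨(i0:ℕ)+1, by omega⟩ (by simp) h
        linarith
      · exact hN
    set γ : ℝ := min γp γn with hγdef
    have hγ : 0 < γ := lt_min hγp_pos hγn_pos
    have hγN : γ ≤ N := by
      have h1 : γ ≤ γn := min_le_right _ _
      rw [hγn] at h1
      split_ifs at h1 with h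
      · have := gnorm_nonneg b ⟨(i0:ℕ)+1, by omega⟩
        linarith
      · exact h1
    have hhead : ∀ i : Fin m, (i : ℕ) < (i0 : ℕ) → N + γ ≤ gnorm b i := by
      intro i hi
      have h0 : 0 < (i0 : ℕ) := by omega
      have hγle : γ ≤ γp := min_le_left _ _
      rw [hγp, dif_pos h0] at hγle
      have hprev : gnorm b ⟨(i0:ℕ)-1, by omega⟩ ≤ gnorm b i := by
        rcases eq_or_lt_of_le (by omega : (i : ℕ) ≤ (i0:ℕ)-1) with he | hlt
        · exact (congrArg (gnorm b) (Fin.ext he : i = ⟨(i0:ℕ)-1, by omega⟩)).ge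
        · exact (hb_strict i ⟨(i0:ℕ)-1, by omega⟩ hlt (by simp; omega)).le
      linarith
    have htail : ∀ j : Fin m, (i0 : ℕ) < (j : ℕ) → gnorm b j ≤ N - γ := by
      intro j hj
      by_cases hjs : (j : ℕ) < s
      · have h1 : (i0:ℕ)+1 < s := by omega
        have hγle : γ ≤ γn := min_le_right _ _
        rw [hγn, dif_pos h1] at hγle
        have hnext : gnorm b j ≤ gnorm b ⟨(i0:ℕ)+1, by omega⟩ := by
          rcases eq_or_lt_of_le (by omega : (i0:ℕ)+1 ≤ (j:ℕ)) with he | hlt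
          · exact (congrArg (gnorm b) (Fin.ext he.symm : j = ⟨(i0:ℕ)+1, by omega⟩)).le
          · exact (hb_strict ⟨(i0:ℕ)+1, by omega⟩ j (by simpa using hlt) hjs).le
        linarith
      · rw [hb_zero j (by omega)]; linarith
    set δ : ℝ := min 1 (2 * N * γ / (2 * |c| + 1)) with hδdef
    have hδ : 0 < δ := lt_min one_pos (by positivity)
    have key : ∀ t : ℝ, |t| ≤ δ →
        g (i0, j0) * t ≤ w * lam i0 * (2*t*c + t^2) / (2*N) := by
      intro t htδ
      have ht1 : |t| ≤ 1 := htδ.trans (min_le_left _ _)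
      have ht2 : |t| ≤ 2 * N * γ / (2 * |c| + 1) := htδ.trans (min_le_right _ _)
      set Δ : ℝ := (2*t*c + t^2)/(2*N) with hΔdef
      have hΔγ : |Δ| ≤ γ := by
        have habs1 : |2 * t * c + t ^ 2| ≤ |t| * (2 * |c| + 1) := by
          calc |2 * t * c + t ^ 2| ≤ |2 * t * c| + |t ^ 2| := abs_add_le _ _
            _ = 2 * |t| * |c| + |t| ^ 2 := by rw [abs_mul, abs_mul, abs_two, abs_pow]
            _ ≤ 2 * |t| * |c| + |t| * 1 := by nlinarith [abs_nonneg t]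
            _ = |t| * (2 * |c| + 1) := by ring
        have h2 : |Δ| = |2 * t * c + t ^ 2| / (2*N) := by
          rw [hΔdef, abs_div, abs_of_pos (by linarith : (0:ℝ) < 2*N)]
        rw [h2, div_le_iff₀ (by linarith : (0:ℝ) < 2*N)]
        have h3 : |t| * (2 * |c| + 1) ≤ (2 * N * γ / (2 * |c| + 1)) * (2 * |c| + 1) := by
          apply mul_le_mul_of_nonneg_right ht2 (by positivity)
        have h4 : (2 * N * γ / (2 * |c| + 1)) * (2 * |c| + 1) = γ * (2*N) := by
          field_simp
        linarith
      have hΔlow : -γ ≤ Δ := by have := abs_le.mp hΔγ; linarith [this.1]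
      have hΔhigh : Δ ≤ γ := (le_abs_self Δ).trans hΔγ
      set y : Fin m → ℝ := fun i => if i = i0 then w*(N + Δ) else w * gnorm b i with hy
      have hynn : ∀ i, 0 ≤ y i := by
        intro i
        simp only [hy]
        split_ifs
        · have : 0 ≤ N + Δ := by linarith
          positivity
        · exact hvnn i
      have hyanti : Antitone y := by
        intro i j hij
        simp only [hy]
        by_cases hj0 : j = i0
        · subst hj0
          by_cases hi0' : i = j
          · subst hi0'; simp
          · have hij' : (i : ℕ) < (j : ℕ) := by
              have := lt_of_le_of_ne hij hi0'
              exact_mod_cast this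
            rw [if_pos rfl, if_neg hi0']
            have := hhead i hij'
            nlinarith
        · rw [if_neg hj0]
          by_cases hi0' : i = i0
          · subst hi0'
            rw [if_pos rfl]
            have hij' : (i : ℕ) < (j : ℕ) := by
              have := lt_of_le_of_ne hij (fun he => hj0 he.symm)
              exact_mod_cast this
            have := htail j hij'
            nlinarith
          · rw [if_neg hi0']
            exact hvanti hij
      -- the perturbation
      set ht : Fin m × Fin l → ℝ := fun cc => if cc = (i0, j0) then t else 0 with hht
      have hinner : ∑ cc, g cc * ht cc = g (i0, j0) * t := by
        rw [hht]
        simp only [mul_ite, mul_zero]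
        rw [Finset.sum_ite_eq' Finset.univ (i0, j0) (fun cc => g cc * t)]
        simp
      have hgother : ∀ i : Fin m, i ≠ i0 → gnorm (b + ht) i = gnorm b i := by
        intro i hi
        unfold gnorm
        congr 1
        apply Finset.sum_congr rfl
        intro j _
        have : (i, j) ≠ (i0, j0) := by
          intro he; exact hi (congrArg Prod.fst he)
        simp [hht, this]
      have hsum0 : ∑ j, b (i0, j) ^ 2 = N^2 := (sq_gnorm b i0).symm
      have hgi0 : gnorm (b + ht) i0 = Real.sqrt (N^2 + (2*t*c + t^2)) := by
        unfold gnorm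
        congr 1
        have hterm : ∀ j : Fin l, (b + ht) (i0, j) ^ 2
            = b (i0, j)^2 + (if j = j0 then 2*t*b (i0,j) + t^2 else 0) := by
          intro j
          by_cases hj : j = j0
          · subst hj
            simp [hht, Pi.add_apply]
            ring
          · have : (i0, j) ≠ (i0, j0) := by
              intro he
              exact hj (congrArg Prod.snd he)
            simp [hht, this, hj, Pi.add_apply]
        rw [Finset.sum_congr rfl (fun j _ => hterm j), Finset.sum_add_distrib, hsum0,
          Finset.sum_ite_eq' Finset.univ j0 (fun j => 2*t*b (i0,j) + t^2)]
        simp [← hcdef]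
      have hmaj : ∀ i, |w * gnorm (b + ht) i| ≤ y i := by
        intro i
        by_cases hi : i = i0
        · subst hi
          rw [hgi0]
          simp only [hy, if_pos rfl]
          rw [
            abs_of_nonneg (mul_nonneg hw.le (Real.sqrt_nonneg _))]
          have hNΔ : 0 ≤ N + Δ := by linarith
          have hsq : Real.sqrt (N^2 + (2*t*c + t^2)) ≤ N + Δ := by
            rw [show N + Δ = Real.sqrt ((N + Δ)^2) from (Real.sqrt_sq hNΔ).symm]
            apply Real.sqrt_le_sqrt
            have h2NΔ : 2*N*Δ = 2*t*c + t^2 := by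
              rw [hΔdef]; field_simp
            nlinarith [sq_nonneg Δ]
          exact mul_le_mul_of_nonneg_left hsq hw.le
        · rw [hgother i hi]
          simp only [hy, if_neg hi]
          rw [abs_of_nonneg (hvnn i)]
      have hJy : Jlam lam (fun i => w * gnorm (b + ht) i) ≤ ∑ i, lam i * y i := by
        rw [← Jlam_of_antitone lam hyanti hynn]
        exact Jlam_mono lam hlam_anti hlam_nonneg hmaj
      have hsumy : ∑ i, lam i * y i
          = (∑ i, lam i * (w * gnorm b i)) + lam i0 * (w * Δ) := by
        have hdiff : ∑ i, lam i * y i - ∑ i, lam i * (w * gnorm b i)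
            = lam i0 * (w * Δ) := by
          rw [← Finset.sum_sub_distrib]
          rw [Finset.sum_eq_single i0]
          · simp only [hy, if_pos rfl]; ring
          · intro i _ hne
            simp only [hy, if_neg hne]; ring
          · intro habs; exact absurd (Finset.mem_univ i0) habs
        linarith
      have hfin := hsub ht
      rw [hinner, hbase] at hfin
      have hchain := hfin.trans hJy
      rw [hsumy] at hchain
      have : g (i0, j0) * t ≤ lam i0 * (w * Δ) := by linarith
      rw [hΔdef] at this
      calc g (i0, j0) * t ≤ lam i0 * (w * ((2*t*c + t^2)/(2*N))) := this
        _ = w * lam i0 * (2*t*c + t^2) / (2*N) := by ring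
    -- conclude from key
    have hE : ∀ ε : ℝ, 0 < ε → |g (i0, j0) * (2*N) - w * lam i0 * (2*c)| ≤ ε := by
      intro ε hε
      set W := w * lam i0 with hW
      have hWnn : 0 ≤ W := mul_nonneg hw.le (hlam_nonneg i0)
      set t0 : ℝ := min δ (ε/(W+1)) with ht0def
      have ht0 : 0 < t0 := lt_min hδ (div_pos hε (by linarith))
      have h1 := key t0 (by rw [abs_of_pos ht0]; exact min_le_left _ _)
      have h2 := key (-t0) (by rw [abs_neg, abs_of_pos ht0]; exact min_le_left _ _)
      have h2N : (0:ℝ) < 2*N := by linarith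
      have h1' : g (i0,j0) * t0 * (2*N) ≤ W * (2*t0*c + t0^2) := by
        have := (le_div_iff₀ h2N).mp h1
        linarith
      have h2' : g (i0,j0) * (-t0) * (2*N) ≤ W * (2*(-t0)*c + t0^2) := by
        have := (le_div_iff₀ h2N).mp h2
        calc g (i0,j0) * (-t0) * (2*N) ≤ W * (2*(-t0)*c + (-t0)^2) := by linarith
          _ = W * (2*(-t0)*c + t0^2) := by ring_nf
      have hub : g (i0,j0) * (2*N) - W * (2*c) ≤ W * t0 := by
        rw [← mul_le_mul_iff_of_pos_right ht0]
        nlinarith [h1']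
      have hlb : -(W * t0) ≤ g (i0,j0) * (2*N) - W * (2*c) := by
        rw [← mul_le_mul_iff_of_pos_right ht0]
        nlinarith [h2']
      have hWt0 : W * t0 ≤ ε := by
        have ht0le : t0 ≤ ε/(W+1) := min_le_right _ _
        have : W * t0 ≤ W * (ε/(W+1)) := mul_le_mul_of_nonneg_left ht0le hWnn
        have h5 : W * (ε/(W+1)) ≤ ε := by
          rw [← mul_div_assoc, div_le_iff₀ (by linarith : (0:ℝ) < W+1)]
          nlinarith
        linarith
      rw [abs_le]
      constructor <;> [linarith; linarith]
    have hE0 : g (i0, j0) * (2*N) - w * lam i0 * (2*c) = 0 := by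
      have h0 : |g (i0, j0) * (2*N) - w * lam i0 * (2*c)| ≤ 0 := by
        by_contra hcon
        push_neg at hcon
        have := hE (|g (i0, j0) * (2*N) - w * lam i0 * (2*c)|/2) (by linarith)
        linarith
      have := abs_nonneg (g (i0, j0) * (2*N) - w * lam i0 * (2*c))
      have : |g (i0, j0) * (2*N) - w * lam i0 * (2*c)| = 0 := le_antisymm h0 this
      exact abs_eq_zero.mp this
    rw [eq_div_iff hN.ne']
    linarith
  · -- Part 2
    intro k
    set tg : Fin (m - s) → ℝ := fun r => gnorm g (tailIdx hs r) with htg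
    have htgnn : ∀ r, 0 ≤ tg r := fun r => gnorm_nonneg g _
    set σ' : Equiv.Perm (Fin (m - s)) := sortPerm tg with hσ'
    set u : Fin (m - s) → Fin l → ℝ := fun r j =>
      if tg r = 0 then (if j = ⟨0, hl⟩ then 1 else 0) else g (tailIdx hs r, j) / tg r with hu
    have hu_sq : ∀ r, ∑ j, (u r j)^2 = 1 := by
      intro r
      simp only [hu]
      by_cases h0 : tg r = 0
      · simp only [if_pos h0]
        rw [Finset.sum_congr rfl
          (fun j _ => by rw [ite_pow]; norm_num : ∀ j ∈ Finset.univ,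
            ((if j = (⟨0, hl⟩ : Fin l) then (1:ℝ) else 0))^2
              = if j = (⟨0, hl⟩ : Fin l) then (1:ℝ) else 0)]
        rw [Finset.sum_ite_eq' Finset.univ (⟨0, hl⟩ : Fin l) (fun _ => (1:ℝ))]
        simp
      · simp only [if_neg h0]
        have hsq : tg r ^ 2 = ∑ j, g (tailIdx hs r, j) ^ 2 := sq_gnorm g _
        rw [Finset.sum_congr rfl (fun j _ => div_pow _ _ _), ← Finset.sum_div, ← hsq]
        field_simp
    have hu_dot : ∀ r, ∑ j, g (tailIdx hs r, j) * u r j = tg r := by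
      intro r
      simp only [hu]
      by_cases h0 : tg r = 0
      · simp only [if_pos h0]
        rw [Finset.sum_eq_zero, h0]
        intro j _
        rw [gnorm_eq_zero_iff h0 j]
        ring
      · simp only [if_neg h0]
        have hsq : tg r ^ 2 = ∑ j, g (tailIdx hs r, j) ^ 2 := sq_gnorm g _
        have hstep : ∀ j ∈ Finset.univ, g (tailIdx hs r, j) * (g (tailIdx hs r, j) / tg r)
            = g (tailIdx hs r, j)^2 / tg r := by
          intro j _; rw [sq]; ring
        rw [Finset.sum_congr rfl hstep, ← Finset.sum_div, ← hsq, sq, mul_div_assoc,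
          div_self h0, mul_one]
    set t : ℝ := if _h : 0 < s then gnorm b ⟨s-1, by omega⟩ else 1 with htdef
    have htpos : 0 < t := by
      rw [htdef]; split_ifs with h
      · exact hb_pos _ (by simp; omega)
      · norm_num
    have ht_le : ∀ i : Fin m, (i:ℕ) < s → t ≤ gnorm b i := by
      intro i hi
      rw [htdef, dif_pos (by omega : 0 < s)]
      exact hbanti i ⟨s-1, by omega⟩ (by simp [Fin.le_def]; omega)
    set h : Fin m × Fin l → ℝ := fun cc =>
      if hc : s ≤ (cc.1 : ℕ) then
        (if σ'.symm ⟨(cc.1:ℕ) - s, by have := cc.1.isLt; omega⟩ ≤ k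
         then t * u ⟨(cc.1:ℕ) - s, by have := cc.1.isLt; omega⟩ cc.2 else 0)
      else 0 with hhdef
    have hh_head : ∀ (i : Fin m) (j : Fin l), (i:ℕ) < s → h (i, j) = 0 := by
      intro i j hi
      simp only [hhdef]
      rw [dif_neg (by omega)]
    have hh_tail : ∀ (r : Fin (m - s)) (j : Fin l),
        h (tailIdx hs r, j) = if σ'.symm r ≤ k then t * u r j else 0 := by
      intro r j
      have hval : ((tailIdx hs r : Fin m) : ℕ) = s + (r : ℕ) := rfl
      have hvaleq : ∀ (p : ((tailIdx hs r : Fin m) : ℕ) - s < m - s),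
          (⟨((tailIdx hs r : Fin m) : ℕ) - s, p⟩ : Fin (m - s)) = r := by
        intro p
        apply Fin.ext
        show ((tailIdx hs r : Fin m) : ℕ) - s = (r : ℕ)
        omega
      simp only [hhdef]
      rw [dif_pos (show s ≤ ((tailIdx hs r : Fin m) : ℕ) by omega)]
      rw [hvaleq]
    have hgnh_head : ∀ i : Fin m, (i:ℕ) < s → gnorm (b + h) i = gnorm b i := by
      intro i hi
      unfold gnorm
      congr 1
      apply Finset.sum_congr rfl
      intro j _
      rw [Pi.add_apply, hh_head i j hi, add_zero]
    have hgnh_tail : ∀ r : Fin (m - s),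
        gnorm (b + h) (tailIdx hs r) = if σ'.symm r ≤ k then t else 0 := by
      intro r
      have hbz : ∀ j, b (tailIdx hs r, j) = 0 :=
        gnorm_eq_zero_iff (hb_zero _ (by simp [tailIdx]))
      unfold gnorm
      have hentry : ∀ j : Fin l, (b + h) (tailIdx hs r, j)
          = if σ'.symm r ≤ k then t * u r j else 0 := by
        intro j
        rw [Pi.add_apply, hbz j, zero_add, hh_tail r j]
      rw [Finset.sum_congr rfl (fun j _ => by rw [hentry j])]
      by_cases hc : σ'.symm r ≤ k
      · simp only [if_pos hc]
        rw [Finset.sum_congr rfl (fun j _ => mul_pow t (u r j) 2), ← Finset.mul_sum,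
          hu_sq r, mul_one, Real.sqrt_sq htpos.le]
      · simp only [if_neg hc]
        simp
    have hinner : ∑ cc, g cc * h cc
        = t * ∑ j ∈ Finset.univ.filter (fun j : Fin (m - s) => j ≤ k), tg (σ' j) := by
      rw [Fintype.sum_prod_type]
      rw [sum_tail hs (fun i => ∑ j, g (i, j) * h (i, j))
        (fun i hi => Finset.sum_eq_zero (fun j _ => by rw [hh_head i j hi, mul_zero]))]
      have hterm : ∀ r : Fin (m - s), ∑ j, g (tailIdx hs r, j) * h (tailIdx hs r, j)
          = if σ'.symm r ≤ k then t * tg r else 0 := by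
        intro r
        rw [Finset.sum_congr rfl (fun j _ => by rw [hh_tail r j])]
        by_cases hc : σ'.symm r ≤ k
        · simp only [if_pos hc]
          rw [Finset.sum_congr rfl (fun j _ => (mul_left_comm _ t _)), ← Finset.mul_sum,
            hu_dot r]
        · simp only [if_neg hc]
          simp
      rw [Finset.sum_congr rfl (fun r _ => hterm r)]
      rw [← Equiv.sum_comp σ' (fun r => if σ'.symm r ≤ k then t * tg r else 0)]
      simp only [Equiv.symm_apply_apply]
      rw [Finset.sum_ite, Finset.sum_const_zero, add_zero, Finset.mul_sum]
    set y : Fin m → ℝ := fun i =>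
      if (i:ℕ) < s then w * gnorm b i else if (i:ℕ) < s + (k:ℕ) + 1 then w*t else 0 with hy
    have hynn : ∀ i, 0 ≤ y i := by
      intro i
      simp only [hy]
      split_ifs
      · exact hvnn i
      · positivity
      · exact le_refl _
    have hyanti : Antitone y := by
      intro i j hij
      have hij' : (i:ℕ) ≤ (j:ℕ) := hij
      simp only [hy]
      by_cases h1 : (j:ℕ) < s
      · rw [if_pos h1, if_pos (by omega : (i:ℕ) < s)]
        exact mul_le_mul_of_nonneg_left (hbanti i j hij) hw.le
      · rw [if_neg h1]
        by_cases h2 : (j:ℕ) < s + (k:ℕ) + 1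
        · rw [if_pos h2]
          by_cases h3 : (i:ℕ) < s
          · rw [if_pos h3]
            exact mul_le_mul_of_nonneg_left (ht_le i h3) hw.le
          · rw [if_neg h3, if_pos (by omega)]
        · rw [if_neg h2]
          split_ifs with h3 h4
          · exact hvnn i
          · positivity
          · exact le_refl _
    have hcomp : (fun i => w * gnorm (b + h) i) = y ∘ (liftTail hs σ'.symm) := by
      funext i
      by_cases hi : (i:ℕ) < s
      · rw [Function.comp_apply, liftTail_head hs σ'.symm i hi]
        simp only [hy, if_pos hi]
        rw [hgnh_head i hi]
      · have hieq : i = tailIdx hs ⟨(i:ℕ) - s, by have := i.isLt; omega⟩ := by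
          apply Fin.ext; simp [tailIdx]; omega
        set r : Fin (m - s) := ⟨(i:ℕ) - s, by have := i.isLt; omega⟩ with hr
        rw [hieq, Function.comp_apply, liftTail_tail hs σ'.symm r, hgnh_tail r]
        have hval : ((tailIdx hs (σ'.symm r) : Fin m) : ℕ)
            = s + ((σ'.symm r : Fin (m - s)) : ℕ) := rfl
        simp only [hy]
        rw [if_neg (show ¬ (((tailIdx hs (σ'.symm r) : Fin m) : ℕ) < s) by omega)]
        by_cases hc : σ'.symm r ≤ k
        · have hcn : ((σ'.symm r : Fin (m - s)) : ℕ) ≤ (k : ℕ) := Fin.le_def.mp hc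
          rw [if_pos hc,
            if_pos (show ((tailIdx hs (σ'.symm r) : Fin m) : ℕ) < s + (k:ℕ) + 1 by omega)]
        · have hcn : ¬ (((σ'.symm r : Fin (m - s)) : ℕ) ≤ (k : ℕ)) :=
            fun hh => hc (Fin.le_def.mpr hh)
          rw [if_neg hc,
            if_neg (show ¬ (((tailIdx hs (σ'.symm r) : Fin m) : ℕ) < s + (k:ℕ) + 1) by omega),
            mul_zero]
    have hJy : Jlam lam (fun i => w * gnorm (b + h) i) = ∑ i, lam i * y i := by
      rw [hcomp, Jlam_comp_perm lam y (liftTail hs σ'.symm), Jlam_of_antitone lam hyanti hynn]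
    have hsumy : ∑ i, lam i * y i = (∑ i, lam i * (w * gnorm b i))
        + w * t * ∑ j ∈ Finset.univ.filter (fun j : Fin (m - s) => j ≤ k),
            lam (tailIdx hs j) := by
      have hdiff : ∑ i, (lam i * y i - lam i * (w * gnorm b i))
          = w * t * ∑ j ∈ Finset.univ.filter (fun j : Fin (m - s) => j ≤ k),
              lam (tailIdx hs j) := by
        rw [sum_tail hs _ (fun i hi => by simp only [hy, if_pos hi]; ring)]
        have hterm : ∀ r : Fin (m - s),
            lam (tailIdx hs r) * y (tailIdx hs r)
              - lam (tailIdx hs r) * (w * gnorm b (tailIdx hs r))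
            = if r ≤ k then lam (tailIdx hs r) * (w * t) else 0 := by
          intro r
          have hval : ((tailIdx hs r : Fin m) : ℕ) = s + (r:ℕ) := rfl
          rw [hb_zero (tailIdx hs r) (by omega)]
          simp only [hy]
          rw [if_neg (show ¬ (((tailIdx hs r : Fin m) : ℕ) < s) by omega)]
          by_cases hc : r ≤ k
          · have hcn : (r:ℕ) ≤ (k:ℕ) := Fin.le_def.mp hc
            rw [if_pos (show ((tailIdx hs r : Fin m) : ℕ) < s + (k:ℕ) + 1 by omega), if_pos hc]
            ring
          · have hcn : ¬ ((r:ℕ) ≤ (k:ℕ)) := fun hh => hc (Fin.le_def.mpr hh)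
            rw [if_neg (show ¬ (((tailIdx hs r : Fin m) : ℕ) < s + (k:ℕ) + 1) by omega),
              if_neg hc]
            ring
        rw [Finset.sum_congr rfl (fun r _ => hterm r)]
        rw [Finset.sum_ite, Finset.sum_const_zero, add_zero, Finset.mul_sum]
        apply Finset.sum_congr rfl
        intro r _
        ring
      rw [Finset.sum_sub_distrib] at hdiff
      linarith
    have hfin := hsub h
    rw [hinner, hbase, hJy, hsumy] at hfin
    have hS : ∑ j ∈ Finset.univ.filter (fun j : Fin (m - s) => j ≤ k), tg (σ' j)
        ≤ w * ∑ j ∈ Finset.univ.filter (fun j : Fin (m - s) => j ≤ k), lam (tailIdx hs j) := by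
      have := hfin
      nlinarith
    calc ∑ i ∈ Finset.univ.filter (fun i : Fin (m - s) => i ≤ k),
          sortedAbs (fun i : Fin (m - s) => gnorm g (tailIdx hs i)) i
        = ∑ j ∈ Finset.univ.filter (fun j : Fin (m - s) => j ≤ k), tg (σ' j) := by
          apply Finset.sum_congr rfl
          intro i _
          rw [show (fun i : Fin (m - s) => gnorm g (tailIdx hs i)) = tg from rfl]
          rw [sortedAbs_eq_comp tg i, ← hσ', abs_of_nonneg (htgnn _)]
      _ ≤ w * ∑ j ∈ Finset.univ.filter (fun j : Fin (m - s) => j ≤ k), lam (tailIdx hs j) := hS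
      _ = ∑ i ∈ Finset.univ.filter (fun i : Fin (m - s) => i ≤ k), w * lam (tailIdx hs i) := by
          rw [Finset.mul_sum]
end

section
/- Let n and r be positive integers with r ≤ n, and let X be a random n×r matrix whose entries are independent and identically distributed with a normal distribution with zero mean and positive variance. Then the random matrix A_X = X (XᵀX)⁻¹ Xᵀ has a well-defined expectation and E[A_X] = (r/n) · I_n. -/
open MeasureTheory ProbabilityTheory Matrix MvPolynomial

namespace GProj

noncomputable def proj {n r : ℕ} (M : Matrix (Fin n) (Fin r) ℝ) : Matrix (Fin n) (Fin n) ℝ :=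
  M * (Mᵀ * M)⁻¹ * Mᵀ

variable {n r : ℕ}

lemma proj_zero {M : Matrix (Fin n) (Fin r) ℝ} (h : ¬ IsUnit (Mᵀ * M).det) :
    proj M = 0 := by
  unfold proj
  rw [Matrix.nonsing_inv_apply_not_isUnit _ h, Matrix.mul_zero, Matrix.zero_mul]

lemma proj_transpose (M : Matrix (Fin n) (Fin r) ℝ) : (proj M)ᵀ = proj M := by
  unfold proj
  rw [Matrix.transpose_mul, Matrix.transpose_mul, Matrix.transpose_nonsing_inv,
    Matrix.transpose_transpose, Matrix.transpose_mul, Matrix.transpose_transpose,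
    Matrix.mul_assoc]

lemma proj_idem {M : Matrix (Fin n) (Fin r) ℝ} (h : IsUnit (Mᵀ * M).det) :
    proj M * proj M = proj M := by
  unfold proj
  have h1 : (Mᵀ * M)⁻¹ * (Mᵀ * M) = 1 := Matrix.nonsing_inv_mul _ h
  calc M * (Mᵀ * M)⁻¹ * Mᵀ * (M * (Mᵀ * M)⁻¹ * Mᵀ)
      = M * ((Mᵀ * M)⁻¹ * (Mᵀ * M)) * ((Mᵀ * M)⁻¹ * Mᵀ) := by
        simp only [Matrix.mul_assoc]
    _ = M * (Mᵀ * M)⁻¹ * Mᵀ := by rw [h1, Matrix.mul_one, Matrix.mul_assoc]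

lemma abs_proj_le_one (M : Matrix (Fin n) (Fin r) ℝ) (i j : Fin n) :
    |proj M i j| ≤ 1 := by
  by_cases h : IsUnit (Mᵀ * M).det
  · have hP : proj M = proj M := rfl
    generalize hPP : proj M = P at *
    have hsym : ∀ a b, P a b = P b a := by
      intro a b
      have h2 := proj_transpose M
      rw [hPP] at h2
      have := congrFun (congrFun h2 a) b
      simpa [Matrix.transpose_apply] using this.symm
    have hdiag : ∀ a, P a a = ∑ k, P a k ^ 2 := by
      intro a
      have h2 := proj_idem h
      rw [hPP] at h2
      have := congrFun (congrFun h2 a) a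
      rw [← this, Matrix.mul_apply]
      exact Finset.sum_congr rfl fun k _ => by rw [sq]; rw [hsym k a]
    have hsq : ∀ a b, P a b ^ 2 ≤ P a a := by
      intro a b
      rw [hdiag a]
      exact Finset.single_le_sum (f := fun k => P a k ^ 2)
        (fun k _ => sq_nonneg _) (Finset.mem_univ b)
    have hle1 : P i i ≤ 1 := by
      by_contra hgt
      push_neg at hgt
      have h1 : P i i ^ 2 ≤ P i i := hsq i i
      nlinarith
    have : P i j ^ 2 ≤ 1 := le_trans (hsq i j) hle1
    rw [abs_le_one_iff_mul_self_le_one, ← sq]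
    exact this
  · rw [proj_zero h]
    simp

lemma proj_perm (M : Matrix (Fin n) (Fin r) ℝ) (σ : Equiv.Perm (Fin n)) (i j : Fin n) :
    proj (M.submatrix σ id) i j = proj M (σ i) (σ j) := by
  have h1 : (M.submatrix (σ : Fin n → Fin n) id)ᵀ * (M.submatrix (σ : Fin n → Fin n) id)
      = Mᵀ * M := by
    rw [Matrix.transpose_submatrix]
    have := Matrix.submatrix_mul_equiv Mᵀ M (id : Fin r → Fin r) σ (id : Fin r → Fin r)
    rw [this, Matrix.submatrix_id_id]
  unfold proj
  rw [h1]
  have h2 : M.submatrix (σ : Fin n → Fin n) id * (Mᵀ * M)⁻¹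
      = (M * (Mᵀ * M)⁻¹).submatrix (σ : Fin n → Fin n) id := by
    have := Matrix.submatrix_mul_equiv M (Mᵀ * M)⁻¹ (σ : Fin n → Fin n)
      (Equiv.refl (Fin r)) (id : Fin r → Fin r)
    simpa using this
  rw [h2, Matrix.transpose_submatrix]
  have h3 : (M * (Mᵀ * M)⁻¹).submatrix (σ : Fin n → Fin n) id * Mᵀ.submatrix id (σ : Fin n → Fin n)
      = ((M * (Mᵀ * M)⁻¹) * Mᵀ).submatrix (σ : Fin n → Fin n) (σ : Fin n → Fin n) := by
    have := Matrix.submatrix_mul_equiv (M * (Mᵀ * M)⁻¹) Mᵀ (σ : Fin n → Fin n)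
      (Equiv.refl (Fin r)) (σ : Fin n → Fin n)
    simpa using this
  rw [h3]
  rfl

lemma proj_sign (M : Matrix (Fin n) (Fin r) ℝ) (d : Fin n → ℝ) (hd : ∀ k, d k * d k = 1)
    (i j : Fin n) :
    proj (Matrix.diagonal d * M) i j = d i * d j * proj M i j := by
  have h1 : (Matrix.diagonal d * M)ᵀ * (Matrix.diagonal d * M) = Mᵀ * M := by
    rw [Matrix.transpose_mul, Matrix.diagonal_transpose, Matrix.mul_assoc,
      ← Matrix.mul_assoc (Matrix.diagonal d), Matrix.diagonal_mul_diagonal]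
    have : (fun i => d i * d i) = fun _ => (1:ℝ) := by funext k; exact hd k
    rw [this]
    simp
  unfold proj
  rw [h1]
  have h2 : Matrix.diagonal d * M * (Mᵀ * M)⁻¹ * (Matrix.diagonal d * M)ᵀ
      = Matrix.diagonal d * (M * (Mᵀ * M)⁻¹ * Mᵀ) * Matrix.diagonal d := by
    rw [Matrix.transpose_mul, Matrix.diagonal_transpose]
    simp only [Matrix.mul_assoc]
  rw [h2, Matrix.mul_diagonal, Matrix.diagonal_mul]
  ring

lemma proj_trace {M : Matrix (Fin n) (Fin r) ℝ} (h : IsUnit (Mᵀ * M).det) :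
    ∑ i, proj M i i = (r : ℝ) := by
  have h0 : ∑ i, proj M i i = Matrix.trace (proj M) := rfl
  rw [h0]
  unfold proj
  rw [Matrix.trace_mul_cycle, Matrix.mul_nonsing_inv _ h, Matrix.trace_one]
  simp

variable {α : Type*} [MeasurableSpace α]

lemma measurable_det_comp {k : ℕ} {f : α → Matrix (Fin k) (Fin k) ℝ}
    (hf : ∀ i j, Measurable fun a => f a i j) :
    Measurable fun a => (f a).det := by
  simp_rw [Matrix.det_apply, Units.smul_def, zsmul_eq_mul]
  exact Finset.measurable_sum _ fun σ _ =>
    (measurable_const.mul (Finset.measurable_prod _ fun i _ => hf _ _))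

lemma measurable_inv_entry {k : ℕ} {f : α → Matrix (Fin k) (Fin k) ℝ}
    (hf : ∀ i j, Measurable fun a => f a i j) (i j : Fin k) :
    Measurable fun a => (f a)⁻¹ i j := by
  simp_rw [Matrix.inv_def, Matrix.smul_apply, Ring.inverse_eq_inv', Matrix.adjugate_apply,
    smul_eq_mul]
  refine Measurable.mul (measurable_det_comp hf).inv (measurable_det_comp ?_)
  intro a b
  simp_rw [Matrix.updateRow_apply]
  by_cases h : a = j
  · simp [h]
  · simpa [h] using hf a b

lemma measurable_proj_entry {f : α → Matrix (Fin n) (Fin r) ℝ}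
    (hf : ∀ i j, Measurable fun a => f a i j) (i j : Fin n) :
    Measurable fun a => proj (f a) i j := by
  have hB : ∀ a b : Fin r, Measurable fun x => ((f x)ᵀ * f x)⁻¹ a b := by
    intro a b
    refine measurable_inv_entry (fun a b => ?_) a b
    simp_rw [Matrix.mul_apply, Matrix.transpose_apply]
    exact Finset.measurable_sum _ fun k _ => (hf k a).mul (hf k b)
  unfold proj
  simp_rw [Matrix.mul_apply, Matrix.transpose_apply, Finset.sum_mul]
  refine Finset.measurable_sum _ fun b _ => Finset.measurable_sum _ fun a _ => ?_
  exact ((hf i a).mul (hB a b)).mul (hf j b)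

lemma measurable_eval {σ : Type*} (p : MvPolynomial σ ℝ) :
    Measurable fun x : σ → ℝ => MvPolynomial.eval x p := by
  induction p using MvPolynomial.induction_on with
  | C c => simp only [MvPolynomial.eval_C]; exact measurable_const
  | add p q hp hq => simp only [_root_.map_add]; exact hp.add hq
  | mul_X p i hp =>
    simp only [_root_.map_mul, MvPolynomial.eval_X]
    exact hp.mul (measurable_pi_apply i)

lemma mv_null (g : Measure ℝ) [IsProbabilityMeasure g] [NullSingletonClass g] :
    ∀ (m : ℕ) (p : MvPolynomial (Fin m) ℝ), p ≠ 0 →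
      Measure.pi (fun _ : Fin m => g) {x | MvPolynomial.eval x p = 0} = 0 := by
  intro m
  induction m with
  | zero =>
    intro p hp
    obtain ⟨c, rfl⟩ := MvPolynomial.C_surjective (Fin 0) p
    have hc : c ≠ 0 := fun h => hp (by rw [h, map_zero])
    have : {x : Fin 0 → ℝ | MvPolynomial.eval x (MvPolynomial.C c) = 0} = ∅ := by
      ext x; simp [hc]
    rw [this]; simp
  | succ m ih =>
    intro p hp
    set q := MvPolynomial.finSuccEquiv ℝ m p with hq
    have hq0 : q ≠ 0 := by
      intro h
      apply hp
      apply (MvPolynomial.finSuccEquiv ℝ m).injective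
      rw [map_zero, ← hq, h]
    set d := q.natDegree with hd
    have hlead : q.coeff d ≠ 0 := by
      rw [hd, ← Polynomial.leadingCoeff]
      exact Polynomial.leadingCoeff_ne_zero.mpr hq0
    have hIH := ih (q.coeff d) hlead
    set S : Set (Fin (m+1) → ℝ) := {x | MvPolynomial.eval x p = 0} with hS
    have hSmeas : MeasurableSet S := (measurable_eval p) (measurableSet_singleton 0)
    set e := MeasurableEquiv.piFinSuccAbove (fun _ : Fin (m+1) => ℝ) 0 with he
    have hMP := measurePreserving_piFinSuccAbove (fun _ : Fin (m+1) => (g : Measure ℝ)) 0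
    have key : Measure.pi (fun _ : Fin (m+1) => g) S
        = (g.prod (Measure.pi fun _ : Fin m => g)) (e.symm ⁻¹' S) := by
      rw [← hMP.map_eq, Measure.map_apply e.measurable (e.symm.measurable hSmeas)]
      congr 1
      ext x
      simp [e]
    rw [key]
    have hswap : (g.prod (Measure.pi fun _ : Fin m => g)) (e.symm ⁻¹' S)
        = ((Measure.pi fun _ : Fin m => g).prod g) (Prod.swap ⁻¹' (e.symm ⁻¹' S)) := by
      rw [← Measure.prod_swap, Measure.map_apply measurable_swap (e.symm.measurable hSmeas)]
    rw [hswap]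
    have hmeas2 : MeasurableSet (Prod.swap ⁻¹' (e.symm ⁻¹' S)) :=
      measurable_swap (e.symm.measurable hSmeas)
    rw [Measure.measure_prod_null hmeas2]
    filter_upwards [measure_eq_zero_iff_ae_notMem.mp hIH] with s hs
    have hpoly : Polynomial.map (MvPolynomial.eval s) q ≠ 0 := by
      intro h
      apply hs
      have : (Polynomial.map (MvPolynomial.eval s) q).coeff d = 0 := by rw [h]; simp
      rw [Polynomial.coeff_map] at this
      exact this
    have hfin : Set.Finite {y : ℝ | Polynomial.eval y (Polynomial.map (MvPolynomial.eval s) q) = 0} :=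
      Polynomial.finite_setOf_isRoot hpoly
    have hsub : (Prod.mk s ⁻¹' (Prod.swap ⁻¹' (e.symm ⁻¹' S)))
        ⊆ {y : ℝ | Polynomial.eval y (Polynomial.map (MvPolynomial.eval s) q) = 0} := by
      intro y hy
      simp only [Set.mem_preimage, Set.mem_setOf_eq] at hy ⊢
      have hxy : e.symm (y, s) ∈ S := hy
      rw [hS, Set.mem_setOf_eq] at hxy
      have hcons : e.symm (y, s) = Fin.cons y s := by
        rw [he, MeasurableEquiv.piFinSuccAbove_symm_apply]
        simp [Fin.insertNthEquiv, Fin.insertNth_zero']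
      rw [hcons, MvPolynomial.eval_eq_eval_mv_eval'] at hxy
      exact hxy
    exact measure_mono_null hsub (Set.Finite.measure_zero hfin g)

lemma mv_null' {ι : Type*} [Fintype ι] (g : Measure ℝ) [IsProbabilityMeasure g] [NullSingletonClass g]
    (p : MvPolynomial ι ℝ) (hp : p ≠ 0) :
    Measure.pi (fun _ : ι => g) {x | MvPolynomial.eval x p = 0} = 0 := by
  classical
  set e := Fintype.equivFin ι with he
  have hMP := measurePreserving_piCongrLeft (fun _ : ι => (g : Measure ℝ)) e.symm
  set T := MeasurableEquiv.piCongrLeft (fun _ : ι => ℝ) e.symm with hT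
  have hSmeas : MeasurableSet {x : ι → ℝ | MvPolynomial.eval x p = 0} :=
    measurable_eval p (measurableSet_singleton 0)
  rw [← hMP.map_eq, Measure.map_apply T.measurable hSmeas]
  have heq : (⇑T) ⁻¹' {x | MvPolynomial.eval x p = 0}
      = {x : Fin (Fintype.card ι) → ℝ | MvPolynomial.eval x (rename e p) = 0} := by
    ext x
    simp only [Set.mem_preimage, Set.mem_setOf_eq, MvPolynomial.eval_rename]
    have hTx : (T x : ι → ℝ) = x ∘ e := by
      funext i
      have hco : (T : (Fin (Fintype.card ι) → ℝ) → (ι → ℝ))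
          = ⇑(Equiv.piCongrLeft (fun _ : ι => ℝ) e.symm) :=
        MeasurableEquiv.coe_piCongrLeft _
      rw [hco, Function.comp_apply]
      have h2 := Equiv.piCongrLeft_apply_apply (fun _ : ι => ℝ) e.symm x (e i)
      rwa [Equiv.symm_apply_apply] at h2
    rw [hTx]
  rw [heq]
  refine mv_null g _ (rename e p) (fun h => hp ?_)
  have := MvPolynomial.rename_injective (R := ℝ) (⇑e) e.injective
  exact this (by rw [h, map_zero])

lemma noAtoms_gaussian {v : NNReal} (hv : v ≠ 0) : NullSingletonClass (gaussianReal 0 v) :=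
  ⟨fun x => gaussianReal_absolutelyContinuous 0 hv (measure_singleton x)⟩

noncomputable def mat (x : (Fin n × Fin r) → ℝ) : Matrix (Fin n) (Fin r) ℝ :=
  Matrix.of fun i j => x (i, j)

noncomputable def detPoly (n r : ℕ) : MvPolynomial (Fin n × Fin r) ℝ :=
  Matrix.det (Matrix.of fun a b : Fin r =>
    ∑ k : Fin n, (MvPolynomial.X (k, a) : MvPolynomial (Fin n × Fin r) ℝ) * MvPolynomial.X (k, b))

lemma eval_detPoly (x : (Fin n × Fin r) → ℝ) :
    MvPolynomial.eval x (detPoly n r) = ((mat x)ᵀ * mat x).det := by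
  unfold detPoly
  rw [RingHom.map_det]
  congr 1
  ext a b
  simp [Matrix.mul_apply, Matrix.transpose_apply, mat]

lemma detPoly_ne_zero (hrn : r ≤ n) : detPoly n r ≠ 0 := by
  intro h
  set x0 : (Fin n × Fin r) → ℝ := fun q => if (q.1 : ℕ) = (q.2 : ℕ) then 1 else 0 with hx0
  have hmat : (mat x0)ᵀ * mat x0 = 1 := by
    ext a b
    rw [Matrix.mul_apply]
    simp only [Matrix.transpose_apply, mat, Matrix.of_apply, hx0]
    have hterm : ∀ k : Fin n,
        (if (k : ℕ) = (a : ℕ) then (1:ℝ) else 0) * (if (k : ℕ) = (b : ℕ) then 1 else 0)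
        = (if k = Fin.castLE hrn a then (1:ℝ) else 0) * (if k = Fin.castLE hrn b then 1 else 0) := by
      intro k
      congr 1 <;> · congr 1; simp [Fin.ext_iff]
    rw [Finset.sum_congr rfl fun k _ => hterm k]
    by_cases hab : a = b
    · subst hab
      simp [Matrix.one_apply_eq]
    · rw [Finset.sum_eq_zero, (Matrix.one_apply_ne hab).symm]
      intro k _
      by_cases h1 : k = Fin.castLE hrn a
      · have h2 : k ≠ Fin.castLE hrn b := by
          intro h2
          exact hab (Fin.castLE_injective hrn (h1 ▸ h2))
        simp [h2]
      · simp [h1]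
  have h1 : MvPolynomial.eval x0 (detPoly n r) = 1 := by
    rw [eval_detPoly, hmat, Matrix.det_one]
  rw [h] at h1
  simp at h1

lemma pi_map_eq {ι : Type*} [Fintype ι] (g : Measure ℝ) [IsProbabilityMeasure g]
    (e : ι ≃ ι) (c : ι → ℝ) (hc : ∀ q, g.map (fun y => c q * y) = g) :
    (Measure.pi fun _ : ι => g).map (fun x q => c q * x (e q)) = Measure.pi fun _ : ι => g := by
  have hT : Measurable fun (x : ι → ℝ) q => c q * x (e q) :=
    measurable_pi_lambda _ fun q => (measurable_pi_apply (e q)).const_mul _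
  refine (Measure.pi_eq fun s hs => ?_).symm
  rw [Measure.map_apply hT (MeasurableSet.univ_pi hs)]
  have hpre : (fun (x : ι → ℝ) q => c q * x (e q)) ⁻¹' Set.pi Set.univ s
      = Set.pi Set.univ (fun q' => (fun y => c (e.symm q') * y) ⁻¹' s (e.symm q')) := by
    ext x
    simp only [Set.mem_preimage, Set.mem_pi, Set.mem_univ, true_implies]
    constructor
    · intro hx q'
      have := hx (e.symm q')
      simpa using this
    · intro hx q
      have := hx (e q)
      simpa using this
  rw [hpre, Measure.pi_pi]
  have hfac : ∀ q', g ((fun y => c (e.symm q') * y) ⁻¹' s (e.symm q')) = g (s (e.symm q')) := by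
    intro q'
    conv_rhs => rw [← hc (e.symm q')]
    rw [Measure.map_apply (measurable_const_mul _) (hs _)]
  rw [Finset.prod_congr rfl fun q' _ => hfac q']
  exact Equiv.prod_comp e.symm fun q => g (s q)

lemma joint_law {Ω : Type*} [MeasurableSpace Ω] (μ : Measure Ω) [IsProbabilityMeasure μ]
    {X : Ω → Matrix (Fin n) (Fin r) ℝ}
    (hmeas : ∀ i j, Measurable (fun ω => X ω i j))
    (hindep : iIndepFun
      (fun (q : Fin n × Fin r) ω => X ω q.1 q.2) μ)
    (v : NNReal)
    (hdist : ∀ q : Fin n × Fin r, μ.map (fun ω => X ω q.1 q.2) = gaussianReal 0 v) :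
    μ.map (fun ω (q : Fin n × Fin r) => X ω q.1 q.2)
      = Measure.pi fun _ : Fin n × Fin r => gaussianReal 0 v := by
  refine (Measure.pi_eq fun s hs => ?_).symm
  have hJ : Measurable fun ω (q : Fin n × Fin r) => X ω q.1 q.2 :=
    measurable_pi_lambda _ fun q => hmeas q.1 q.2
  rw [Measure.map_apply hJ (MeasurableSet.univ_pi hs)]
  have hiInt : (fun ω (q : Fin n × Fin r) => X ω q.1 q.2) ⁻¹' Set.pi Set.univ s
      = ⋂ q, (fun ω => X ω q.1 q.2) ⁻¹' s q := by
    ext ω; simp [Set.mem_pi]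
  rw [hiInt, hindep.meas_iInter fun q => ⟨s q, hs q, rfl⟩]
  refine Finset.prod_congr rfl fun q _ => ?_
  rw [← hdist q, Measure.map_apply (hmeas q.1 q.2) (hs q)]

end GProj

open GProj

/-- If `X` is a random `n×r` matrix (`1 ≤ r ≤ n`) with i.i.d. centered nondegenerate Gaussian
entries, then the orthogonal projection `A_X = X(XᵀX)⁻¹Xᵀ` has a well-defined (entrywise)
expectation and `E[A_X] = (r/n)·I_n`. -/
theorem expectation_gaussian_projection {n r : ℕ} (hr : 1 ≤ r) (hrn : r ≤ n)
    {Ω : Type*} [MeasurableSpace Ω] (μ : Measure Ω) [IsProbabilityMeasure μ]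
    (X : Ω → Matrix (Fin n) (Fin r) ℝ)
    (hmeas : ∀ i j, Measurable (fun ω => X ω i j))
    (hindep : iIndepFun
      (fun (q : Fin n × Fin r) ω => X ω q.1 q.2) μ)
    (v : NNReal) (hv : v ≠ 0)
    (hdist : ∀ q : Fin n × Fin r, μ.map (fun ω => X ω q.1 q.2) = gaussianReal 0 v) :
    ∀ i j : Fin n,
      Integrable (fun ω => (X ω * ((X ω)ᵀ * X ω)⁻¹ * (X ω)ᵀ) i j) μ ∧
      ∫ ω, (X ω * ((X ω)ᵀ * X ω)⁻¹ * (X ω)ᵀ) i j ∂μ =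
        (((r : ℝ) / (n : ℝ)) • (1 : Matrix (Fin n) (Fin n) ℝ)) i j := by
  intro i j
  set g : Measure ℝ := gaussianReal 0 v with hg
  haveI : NullSingletonClass g := noAtoms_gaussian hv
  set ν : Measure ((Fin n × Fin r) → ℝ) := Measure.pi fun _ => g with hν
  have hJmeas : Measurable fun ω (q : Fin n × Fin r) => X ω q.1 q.2 :=
    measurable_pi_lambda _ fun q => hmeas q.1 q.2
  have hmap : μ.map (fun ω (q : Fin n × Fin r) => X ω q.1 q.2) = ν :=
    joint_law μ hmeas hindep v hdist
  have hmE : ∀ (a : Fin n) (b : Fin r), Measurable fun x : (Fin n × Fin r) → ℝ => mat x a b :=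
    fun a b => measurable_pi_apply (a, b)
  have hFmeas : ∀ a b : Fin n, Measurable fun x : (Fin n × Fin r) → ℝ => proj (mat x) a b :=
    fun a b => measurable_proj_entry hmE a b
  have hint : ∀ a b : Fin n, Integrable (fun ω => proj (X ω) a b) μ := by
    intro a b
    refine (integrable_const (1:ℝ)).mono'
      ((measurable_proj_entry hmeas a b).aestronglyMeasurable) ?_
    exact ae_of_all _ fun ω => by
      rw [Real.norm_eq_abs]; exact abs_proj_le_one (X ω) a b
  refine ⟨hint i j, ?_⟩
  have hintν : ∀ a b : Fin n, Integrable (fun x => proj (mat x) a b) ν := by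
    intro a b
    refine (integrable_const (1:ℝ)).mono' (hFmeas a b).aestronglyMeasurable ?_
    exact ae_of_all _ fun x => by rw [Real.norm_eq_abs]; exact abs_proj_le_one _ a b
  have htrans : ∀ a b : Fin n, ∫ ω, proj (X ω) a b ∂μ = ∫ x, proj (mat x) a b ∂ν := by
    intro a b
    rw [← hmap, integral_map hJmeas.aemeasurable (hFmeas a b).aestronglyMeasurable]
    rfl
  have hinv : ∀ (e : Equiv.Perm (Fin n × Fin r)) (c : (Fin n × Fin r) → ℝ),
      (∀ q, c q = 1 ∨ c q = -1) → ∀ (f : ((Fin n × Fin r) → ℝ) → ℝ), Measurable f →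
      ∫ x, f (fun q => c q * x (e q)) ∂ν = ∫ x, f x ∂ν := by
    intro e c hc f hf
    have hmapT : ν.map (fun x q => c q * x (e q)) = ν := by
      rw [hν]
      refine pi_map_eq g e c fun q => ?_
      rcases hc q with h | h
      · rw [h]; simp
      · rw [h, hg]
        have h2 := gaussianReal_map_const_mul (μ := (0:ℝ)) (v := v) (-1)
        show Measure.map (fun y => (-1:ℝ) * y) (gaussianReal 0 v) = gaussianReal 0 v
        rw [h2]
        congr 1
        · norm_num
        · have h4 : (⟨(-1:ℝ)^2, sq_nonneg _⟩ : NNReal) = 1 := by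
            ext; norm_num
          ext; simp
    have hT : Measurable fun (x : (Fin n × Fin r) → ℝ) q => c q * x (e q) :=
      measurable_pi_lambda _ fun q => (measurable_pi_apply (e q)).const_mul _
    conv_rhs => rw [← hmapT]
    rw [integral_map hT.aemeasurable hf.aestronglyMeasurable]
  have hae : ∀ᵐ x ∂ν, IsUnit ((mat x)ᵀ * mat x).det := by
    have h0 : ν {x | MvPolynomial.eval x (detPoly n r) = 0} = 0 :=
      mv_null' g (detPoly n r) (detPoly_ne_zero hrn)
    refine (measure_eq_zero_iff_ae_notMem.mp h0).mono fun x hx => ?_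
    simp only [Set.mem_setOf_eq, eval_detPoly] at hx
    exact isUnit_iff_ne_zero.mpr hx
  have hdiag_eq : ∀ a b : Fin n, ∫ x, proj (mat x) a a ∂ν = ∫ x, proj (mat x) b b ∂ν := by
    intro a b
    set σ := Equiv.swap a b with hσ
    set e : Equiv.Perm (Fin n × Fin r) := Equiv.prodCongr σ (Equiv.refl (Fin r)) with he
    have hkey := hinv e (fun _ => 1) (fun _ => Or.inl rfl)
      (fun x => proj (mat x) a a) (hFmeas a a)
    have hrw : ∀ x : (Fin n × Fin r) → ℝ,
        proj (mat (fun q => (1:ℝ) * x (e q))) a a = proj (mat x) b b := by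
      intro x
      have h1 : mat (fun q => (1:ℝ) * x (e q)) = (mat x).submatrix σ id := by
        ext k l
        simp [mat, he, Matrix.submatrix_apply]
      rw [h1, proj_perm, hσ, Equiv.swap_apply_left]
    have h2 : ∫ x, proj (mat x) b b ∂ν = ∫ x, proj (mat x) a a ∂ν := by
      rw [← hkey]
      exact integral_congr_ae (ae_of_all _ fun x => (hrw x).symm)
    exact h2.symm
  have hsum : ∑ k : Fin n, ∫ x, proj (mat x) k k ∂ν = (r : ℝ) := by
    rw [← integral_finset_sum _ (fun k _ => hintν k k)]
    have h1 : ∫ x, ∑ k, proj (mat x) k k ∂ν = ∫ _x, (r:ℝ) ∂ν := by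
      refine integral_congr_ae ?_
      filter_upwards [hae] with x hx
      exact proj_trace hx
    rw [h1, integral_const, probReal_univ]
    simp
  show ∫ ω, proj (X ω) i j ∂μ = _
  rw [htrans i j]
  by_cases hij : i = j
  · subst hij
    have hval : (n:ℝ) * ∫ x, proj (mat x) i i ∂ν = r := by
      rw [← hsum, Finset.sum_congr rfl fun k _ => hdiag_eq k i]
      rw [Finset.sum_const, Finset.card_univ, Fintype.card_fin, nsmul_eq_mul]
    have hn : (n:ℝ) ≠ 0 := Nat.cast_ne_zero.mpr (by omega)
    rw [Matrix.smul_apply, Matrix.one_apply_eq, smul_eq_mul, mul_one]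
    rw [eq_div_iff hn]
    linear_combination hval
  · have hoff : ∫ x, proj (mat x) i j ∂ν = 0 := by
      set c : (Fin n × Fin r) → ℝ := fun q => if q.1 = i then -1 else 1 with hc0
      have hc : ∀ q, c q = 1 ∨ c q = -1 := fun q => by
        by_cases h : q.1 = i <;> simp [hc0, h]
      have hkey := hinv (Equiv.refl _) c hc (fun x => proj (mat x) i j) (hFmeas i j)
      set d : Fin n → ℝ := fun k => if k = i then -1 else 1 with hd0
      have hd : ∀ k, d k * d k = 1 := fun k => by
        by_cases h : k = i <;> simp [hd0, h]
      have hrw : ∀ x : (Fin n × Fin r) → ℝ,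
          proj (mat (fun q => c q * x ((Equiv.refl (Fin n × Fin r)) q))) i j
          = - proj (mat x) i j := by
        intro x
        have h1 : mat (fun q => c q * x q) = Matrix.diagonal d * mat x := by
          ext k l
          simp [mat, hc0, hd0, Matrix.diagonal_mul]
        simp only [Equiv.refl_apply]
        rw [h1, proj_sign _ d hd]
        have hdi : d i = -1 := by simp [hd0]
        have hdj : d j = 1 := by simp [hd0, Ne.symm hij]
        rw [hdi, hdj]
        ring
      have h2 : ∫ x, - proj (mat x) i j ∂ν = ∫ x, proj (mat x) i j ∂ν := by
        rw [← hkey]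
        exact integral_congr_ae (ae_of_all _ fun x => (hrw x).symm)
      rw [integral_neg] at h2
      linarith
    rw [hoff, Matrix.smul_apply, Matrix.one_apply_ne hij, smul_eq_mul, mul_zero]
end

section
/- Let l ≥ 1 and m ≥ 2 be integers and let Ψ₁,…,Ψ_m be independent random variables, each having the chi-square distribution with l degrees of freedom. Then E[max_{i=1,…,m} Ψ_i] ≤ 4 ln(m) / (1 − m^{−2/l}). -/
open MeasureTheory ProbabilityTheory

open Real Set

/-- The chi-square distribution with `l` degrees of freedom, i.e. the Gamma distribution with
shape `l/2` and rate `1/2`. -/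
noncomputable def chiSqMeasure (l : ℕ) : Measure ℝ :=
  gammaMeasure ((l : ℝ) / 2) (1 / 2)


lemma pdf_mul_exp' (a r t x : ℝ) (ht : 0 < t) (hrt : t < r) :
    gammaPDFReal a r x * Real.exp (t * x)
      = (r / (r - t)) ^ a * gammaPDFReal a (r - t) x := by
  have hrt' : 0 < r - t := by linarith
  have hr : 0 < r := ht.trans hrt
  unfold gammaPDFReal
  split_ifs with hx
  · have h1 : r ^ a = (r / (r - t)) ^ a * (r - t) ^ a := by
      rw [← Real.mul_rpow (by positivity) (by positivity), div_mul_cancel₀]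
      positivity
    have he : rexp (-(r * x)) * rexp (t * x) = rexp (-((r - t) * x)) := by
      rw [← Real.exp_add]; congr 1; ring
    rw [mul_assoc, he, h1]; ring
  · ring

lemma gammaPDF_mul' (a r t x : ℝ) (ha : 0 < a) (ht : 0 < t) (hrt : t < r) :
    gammaPDF a r x * ENNReal.ofReal (Real.exp (t * x))
      = ENNReal.ofReal ((r / (r - t)) ^ a) * gammaPDF a (r - t) x := by
  have hr : 0 < r := ht.trans hrt
  have hrt2 : 0 < r - t := by linarith
  have hc : (0:ℝ) ≤ (r / (r - t)) ^ a := Real.rpow_nonneg (by positivity) a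
  rw [gammaPDF, gammaPDF, ← ENNReal.ofReal_mul (gammaPDFReal_nonneg ha hr x),
    pdf_mul_exp' a r t x ht hrt, ENNReal.ofReal_mul hc]

lemma measurable_gammaPDF' (a r : ℝ) : Measurable (gammaPDF a r) :=
  (measurable_gammaPDFReal a r).ennreal_ofReal

lemma lintegral_exp_gamma' (a r t : ℝ) (ha : 0 < a) (ht : 0 < t) (hrt : t < r) :
    ∫⁻ x, ENNReal.ofReal (Real.exp (t * x)) ∂(gammaMeasure a r)
      = ENNReal.ofReal ((r / (r - t)) ^ a) := by
  rw [gammaMeasure, lintegral_withDensity_eq_lintegral_mul _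
    (measurable_gammaPDF' a r) (Measurable.ennreal_ofReal (by fun_prop))]
  simp only [Pi.mul_apply]
  calc ∫⁻ x, gammaPDF a r x * ENNReal.ofReal (Real.exp (t * x))
      = ∫⁻ x, ENNReal.ofReal ((r / (r - t)) ^ a) * gammaPDF a (r - t) x := by
        simp_rw [gammaPDF_mul' a r t _ ha ht hrt]
    _ = ENNReal.ofReal ((r / (r - t)) ^ a) := by
        rw [lintegral_const_mul _ (measurable_gammaPDF' a (r - t)),
          lintegral_gammaPDF_eq_one ha (by linarith), mul_one]

lemma integrable_exp_gamma' (a r t : ℝ) (ha : 0 < a) (ht : 0 < t) (hrt : t < r) :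
    Integrable (fun x => Real.exp (t * x)) (gammaMeasure a r) := by
  refine ⟨(by fun_prop : Measurable fun x => Real.exp (t * x)).aestronglyMeasurable, ?_⟩
  rw [hasFiniteIntegral_iff_norm]
  have : ∀ x : ℝ, ENNReal.ofReal ‖Real.exp (t * x)‖ = ENNReal.ofReal (Real.exp (t * x)) := by
    intro x; rw [Real.norm_eq_abs, abs_of_nonneg (Real.exp_nonneg _)]
  simp_rw [this, lintegral_exp_gamma' a r t ha ht hrt]
  exact ENNReal.ofReal_lt_top

lemma integral_exp_gamma' (a r t : ℝ) (ha : 0 < a) (ht : 0 < t) (hrt : t < r) :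
    ∫ x, Real.exp (t * x) ∂(gammaMeasure a r) = (r / (r - t)) ^ a := by
  have hr : 0 < r := ht.trans hrt
  have hrt2 : 0 < r - t := by linarith
  rw [integral_eq_lintegral_of_nonneg_ae (ae_of_all _ fun x => Real.exp_nonneg _)
    ((by fun_prop : Measurable fun x => Real.exp (t * x)).aestronglyMeasurable),
    lintegral_exp_gamma' a r t ha ht hrt,
    ENNReal.toReal_ofReal (Real.rpow_nonneg (by positivity) a)]

/-- If `Ψ₁,…,Ψ_m` (with `m ≥ 2`) are independent random variables, each chi-square
distributed with `l ≥ 1` degrees of freedom, then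
`E[max_i Ψ_i] ≤ 4 ln(m) / (1 − m^{−2/l})`. -/
theorem expectation_max_chiSq (l m : ℕ) (hl : 1 ≤ l) (hm : 2 ≤ m)
    {Ω : Type*} [MeasurableSpace Ω] (μ : Measure Ω) [IsProbabilityMeasure μ]
    (Ψ : Fin m → Ω → ℝ) (hmeas : ∀ i, Measurable (Ψ i))
    (hindep : iIndepFun Ψ μ)
    (hdist : ∀ i, μ.map (Ψ i) = chiSqMeasure l) :
    ∫ ω, (⨆ i : Fin m, Ψ i ω) ∂μ ≤
      4 * Real.log m / (1 - (m : ℝ) ^ (-(2 : ℝ) / (l : ℝ))) := by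
  have hl0 : (0:ℝ) < l := by exact_mod_cast hl
  have hm1 : (1:ℝ) < m := by exact_mod_cast hm
  set δ : ℝ := (m:ℝ) ^ (-(2:ℝ)/(l:ℝ)) with hδ
  have hδ0 : 0 < δ := Real.rpow_pos_of_pos (by positivity) _
  have hδ1 : δ < 1 :=
    Real.rpow_lt_one_of_one_lt_of_neg hm1 (by
      apply div_neg_of_neg_of_pos <;> [norm_num; exact hl0])
  set t : ℝ := (1 - δ)/2 with htdef
  have ht : 0 < t := by simp only [htdef]; linarith
  have ht2 : t < 1/2 := by simp only [htdef]; linarith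
  have ha : 0 < (l:ℝ)/2 := by positivity
  -- the mgf value is m
  have hc : ((1/2 : ℝ) / (1/2 - t)) ^ ((l:ℝ)/2) = (m:ℝ) := by
    have h1 : (1/2 : ℝ) / (1/2 - t) = δ⁻¹ := by
      rw [htdef]; field_simp
      rw [sub_sub_cancel]; exact div_self hδ0.ne'
    have h2 : δ⁻¹ = (m:ℝ) ^ ((2:ℝ)/(l:ℝ)) := by
      rw [hδ, neg_div, Real.rpow_neg (by positivity), inv_inv]
    have h3 : (2:ℝ)/(l:ℝ) * ((l:ℝ)/2) = 1 := by field_simp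
    rw [h1, h2, ← Real.rpow_mul (by positivity : (0:ℝ) ≤ (m:ℝ)), h3, Real.rpow_one]
  -- integrability and value of each exponential moment
  have hintg : ∀ i, Integrable (fun ω => rexp (t * Ψ i ω)) μ := by
    intro i
    have h := integrable_exp_gamma' ((l:ℝ)/2) (1/2) t ha ht ht2
    rw [show gammaMeasure ((l:ℝ)/2) (1/2) = chiSqMeasure l from rfl, ← hdist i] at h
    exact (integrable_map_measure
      ((by fun_prop : Measurable fun x => rexp (t * x)).aestronglyMeasurable)
      (hmeas i).aemeasurable).mp h
  have hval : ∀ i, ∫ ω, rexp (t * Ψ i ω) ∂μ = (m:ℝ) := by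
    intro i
    have h := integral_map (μ := μ) (hmeas i).aemeasurable
      ((by fun_prop : Measurable fun x => rexp (t * x)).aestronglyMeasurable)
    rw [hdist i, chiSqMeasure, integral_exp_gamma' _ _ _ ha ht ht2, hc] at h
    exact h.symm
  set f : Ω → ℝ := fun ω => ∑ i, rexp (t * Ψ i ω) with hfdef
  have hf_int : Integrable f μ := integrable_finset_sum _ (fun i _ => hintg i)
  have hf_val : ∫ ω, f ω ∂μ = (m:ℝ) * m := by
    rw [hfdef, integral_finset_sum _ (fun i _ => hintg i)]
    simp only [hval]
    rw [Finset.sum_const, Finset.card_univ, Fintype.card_fin, nsmul_eq_mul]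
  -- a.e. nonnegativity
  have hpos : ∀ᵐ ω ∂μ, ∀ i, 0 ≤ Ψ i ω := by
    rw [ae_all_iff]
    intro i
    have hmap : μ.map (Ψ i) (Iio 0) = 0 := by
      rw [hdist i, chiSqMeasure, gammaMeasure, withDensity_apply _ measurableSet_Iio,
        setLIntegral_congr_fun measurableSet_Iio
          (fun x (hx : x ∈ Iio 0) => gammaPDF_of_neg hx), lintegral_zero]
    rw [Measure.map_apply (hmeas i) measurableSet_Iio] at hmap
    rw [ae_iff]
    simp only [not_le]; exact hmap
  have hf1 : ∀ᵐ ω ∂μ, (m:ℝ) ≤ f ω := by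
    filter_upwards [hpos] with ω hω
    calc (m:ℝ) = ∑ _i : Fin m, (1:ℝ) := by simp
    _ ≤ f ω := Finset.sum_le_sum fun i _ => by
        rw [← Real.exp_zero]
        exact Real.exp_le_exp.mpr (mul_nonneg ht.le (hω i))
  have hf1' : ∀ᵐ ω ∂μ, (1:ℝ) ≤ f ω := by
    filter_upwards [hf1] with ω hω; linarith
  -- log f is integrable
  have hlogmeas : Measurable fun ω => Real.log (f ω) := by
    apply Real.measurable_log.comp
    exact Finset.measurable_sum _ fun i _ => (by fun_prop : Measurable fun ω => rexp (t * Ψ i ω))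
  have hlog_int : Integrable (fun ω => Real.log (f ω)) μ := by
    refine hf_int.mono hlogmeas.aestronglyMeasurable ?_
    filter_upwards [hf1'] with ω hω
    rw [Real.norm_eq_abs, Real.norm_eq_abs, abs_of_nonneg (Real.log_nonneg hω),
      abs_of_nonneg (by linarith)]
    exact Real.log_le_self (by linarith)
  -- Jensen
  have hjensen : ∫ ω, Real.log (f ω) ∂μ ≤ Real.log (∫ ω, f ω ∂μ) := by
    have hconc : ConcaveOn ℝ (Ici 1) Real.log :=
      strictConcaveOn_log_Ioi.concaveOn.subset
        (fun x hx => Set.mem_Ioi.mpr (lt_of_lt_of_le one_pos (Set.mem_Ici.mp hx))) (convex_Ici 1)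
    exact hconc.le_map_integral
      (Real.continuousOn_log.mono (fun x hx => by
        simp only [Set.mem_compl_iff, Set.mem_singleton_iff]
        intro h; rw [h] at hx; exact absurd hx (by norm_num)))
      isClosed_Ici hf1' hf_int hlog_int
  -- sup bound
  have hne : Nonempty (Fin m) := ⟨⟨0, by omega⟩⟩
  have hsup : ∀ᵐ ω ∂μ, (⨆ i, Ψ i ω) ≤ (1/t) * Real.log (f ω) := by
    filter_upwards with ω
    refine ciSup_le fun i => ?_
    have h1 : rexp (t * Ψ i ω) ≤ f ω :=
      Finset.single_le_sum (f := fun j => rexp (t * Ψ j ω))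
        (fun j _ => (Real.exp_pos _).le) (Finset.mem_univ i)
    have h2 : t * Ψ i ω ≤ Real.log (f ω) := by
      rw [← Real.log_exp (t * Ψ i ω)]
      exact Real.log_le_log (Real.exp_pos _) h1
    calc Ψ i ω = (1/t) * (t * Ψ i ω) := by field_simp
    _ ≤ (1/t) * Real.log (f ω) := by
        exact mul_le_mul_of_nonneg_left h2 (by positivity)
  have hsup0 : ∀ᵐ ω ∂μ, 0 ≤ ⨆ i, Ψ i ω := by
    filter_upwards [hpos] with ω hω
    exact le_trans (hω ⟨0, by omega⟩)
      (le_ciSup (f := fun i => Ψ i ω) (Set.Finite.bddAbove (Set.finite_range _)) _)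
  -- conclude
  have hmne : (m:ℝ) ≠ 0 := by positivity
  calc ∫ ω, (⨆ i, Ψ i ω) ∂μ
      ≤ ∫ ω, (1/t) * Real.log (f ω) ∂μ :=
        integral_mono_of_nonneg hsup0 (hlog_int.const_mul _) hsup
    _ = (1/t) * ∫ ω, Real.log (f ω) ∂μ := integral_const_mul _ _
    _ ≤ (1/t) * Real.log (∫ ω, f ω ∂μ) :=
        mul_le_mul_of_nonneg_left hjensen (by positivity)
    _ = (1/t) * ((2:ℝ) * Real.log m) := by
        rw [hf_val, Real.log_mul hmne hmne]; ring
    _ = 4 * Real.log m / (1 - δ) := by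
        rw [htdef]
        have : (1:ℝ) - δ ≠ 0 := by linarith
        field_simp
        ring
end
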